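/- Let u(t,x) = x·Φ(g(t,x)) − K e^{−rt} Φ(h(t,x)) with g,h as in the Black-Scholes formula. Then for every x > 0, lim_{t→0⁺} u(t,x) = max(x − K, 0). -/

import Mathlib

open Real Filter Topology MeasureTheory Set

/-- The standard normal cumulative distribution function. -/
noncomputable def stdNormalCDF (x : ℝ) : ℝ :=
  (Real.sqrt (2 * Real.pi))⁻¹ * ∫ y in Set.Iio x, Real.exp (-y ^ 2 / 2)

lemma gauss_integrable : Integrable (fun y : ℝ => Real.exp (-y ^ 2 / 2)) := by
  have h := integrable_exp_neg_mul_sq (by norm_num : (0:ℝ) < 1/2)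
  refine h.congr (by filter_upwards with y; ring_nf)

lemma gauss_total : ∫ y : ℝ, Real.exp (-y ^ 2 / 2) = Real.sqrt (2 * Real.pi) := by
  have h := integral_gaussian (1/2 : ℝ)
  have : ∀ y : ℝ, Real.exp (-(1/2) * y ^ 2) = Real.exp (-y ^ 2 / 2) := by
    intro y; ring_nf
  rw [← funext this, h]
  rw [show Real.pi / (1/2) = 2 * Real.pi by ring]

lemma stdNormalCDF_atTop : Tendsto stdNormalCDF atTop (𝓝 1) := by
  have hmono : Monotone (fun x : ℝ => Set.Iio x) := fun a b hab => Iio_subset_Iio hab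
  have hU : (⋃ x : ℝ, Set.Iio x) = Set.univ := Set.iUnion_Iio
  have h := tendsto_setIntegral_of_monotone (μ := volume) (f := fun y : ℝ => Real.exp (-y^2/2))
    (fun x : ℝ => measurableSet_Iio) hmono (by rw [hU]; exact gauss_integrable.integrableOn)
  rw [hU] at h
  have h2 := h.const_mul (Real.sqrt (2*Real.pi))⁻¹
  simp only [MeasureTheory.setIntegral_univ, gauss_total,
    inv_mul_cancel₀ (show Real.sqrt (2*Real.pi) ≠ 0 by positivity)] at h2
  exact h2

lemma stdNormalCDF_atBot : Tendsto stdNormalCDF atBot (𝓝 0) := by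
  have hanti : Antitone (fun x : ℝ => Set.Iio (-x)) := fun a b hab => Iio_subset_Iio (by linarith)
  have hI : (⋂ x : ℝ, Set.Iio (-x)) = (∅ : Set ℝ) := by
    ext y; simp only [mem_iInter, mem_Iio, mem_empty_iff_false, iff_false, not_forall, not_lt]
    exact ⟨-y, by linarith⟩
  have h := tendsto_setIntegral_of_antitone (μ := volume) (f := fun y : ℝ => Real.exp (-y^2/2))
    (fun x : ℝ => measurableSet_Iio) hanti ⟨0, gauss_integrable.integrableOn⟩
  rw [hI] at h
  simp only [Measure.restrict_empty, integral_zero_measure] at h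
  have h2 : Tendsto (fun x : ℝ => stdNormalCDF (-x)) atTop (𝓝 0) := by
    simpa [stdNormalCDF] using h.const_mul (Real.sqrt (2*Real.pi))⁻¹
  have := h2.comp tendsto_neg_atBot_atTop
  simpa [Function.comp_def] using this

lemma stdNormalCDF_continuous : Continuous stdNormalCDF := by
  have key : ∀ x : ℝ, stdNormalCDF x =
      (Real.sqrt (2*Real.pi))⁻¹ * ((∫ y in Set.Iic (0:ℝ), Real.exp (-y^2/2))
        + ∫ y in (0:ℝ)..x, Real.exp (-y^2/2)) := by
    intro x
    rw [stdNormalCDF, ← integral_Iic_eq_integral_Iio,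
      ← intervalIntegral.integral_Iic_sub_Iic gauss_integrable.integrableOn
        gauss_integrable.integrableOn]
    ring
  simp only [funext key]
  exact continuous_const.mul (continuous_const.add (gauss_integrable.continuous_primitive 0))

/-- The Black–Scholes solution satisfies the terminal condition:
`u(t,x) → max(x - K, 0)` as `t → 0⁺`, for every `x > 0`. -/
theorem blackScholes_initial_condition (K σ r : ℝ) (hK : 0 < K) (hσ : 0 < σ) (hr : 0 < r)
    (g h u : ℝ → ℝ → ℝ)
    (hg : ∀ t x, g t x = (Real.log (x / K) + (r + σ ^ 2 / 2) * t) / (σ * Real.sqrt t))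
    (hh : ∀ t x, h t x = g t x - σ * Real.sqrt t)
    (hu : ∀ t x, u t x = x * stdNormalCDF (g t x)
        - K * Real.exp (-r * t) * stdNormalCDF (h t x)) :
    ∀ x > (0 : ℝ),
      Tendsto (fun t => u t x) (nhdsWithin 0 (Set.Ioi 0)) (nhds (max (x - K) 0)) := by
  intro x hx
  have hsqrt : Tendsto (fun t : ℝ => σ * Real.sqrt t) (𝓝[>] 0) (𝓝 0) := by
    have : Tendsto (fun t : ℝ => σ * Real.sqrt t) (𝓝 0) (𝓝 (σ * Real.sqrt 0)) :=
      (continuous_const.mul Real.continuous_sqrt).tendsto 0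
    simpa using this.mono_left nhdsWithin_le_nhds
  have hexp : Tendsto (fun t : ℝ => Real.exp (-r * t)) (𝓝[>] 0) (𝓝 1) := by
    have : Tendsto (fun t : ℝ => Real.exp (-r * t)) (𝓝 0) (𝓝 (Real.exp (-r * 0))) :=
      (Real.continuous_exp.comp (continuous_const.mul continuous_id)).tendsto 0
    simpa using this.mono_left nhdsWithin_le_nhds
  have hnum : Tendsto (fun t : ℝ => Real.log (x / K) + (r + σ^2/2) * t) (𝓝[>] 0)
      (𝓝 (Real.log (x / K))) := by
    have : Tendsto (fun t : ℝ => Real.log (x / K) + (r + σ^2/2) * t) (𝓝 0)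
        (𝓝 (Real.log (x / K) + (r + σ^2/2) * 0)) :=
      (continuous_const.add (continuous_const.mul continuous_id)).tendsto 0
    simpa using this.mono_left nhdsWithin_le_nhds
  have hinv : Tendsto (fun t : ℝ => (σ * Real.sqrt t)⁻¹) (𝓝[>] 0) atTop := by
    apply tendsto_inv_nhdsGT_zero.comp
    rw [tendsto_nhdsWithin_iff]
    refine ⟨hsqrt, ?_⟩
    filter_upwards [self_mem_nhdsWithin] with t ht
    have : 0 < Real.sqrt t := Real.sqrt_pos.mpr ht
    exact mul_pos hσ this
  rcases lt_trichotomy x K with hxK | hxK | hxK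
  · -- x < K : limit is 0
    have hlog : Real.log (x / K) < 0 :=
      Real.log_neg (div_pos hx hK) ((div_lt_one hK).mpr hxK)
    have hgbot : Tendsto (fun t => g t x) (𝓝[>] 0) atBot := by
      have : Tendsto (fun t : ℝ => (Real.log (x / K) + (r + σ^2/2) * t) * (σ * Real.sqrt t)⁻¹)
          (𝓝[>] 0) atBot := Tendsto.neg_mul_atTop hlog hnum hinv
      refine this.congr fun t => by rw [hg]; exact (div_eq_mul_inv _ _).symm
    have hhbot : Tendsto (fun t => h t x) (𝓝[>] 0) atBot := by
      have := hgbot.atBot_add (hsqrt.neg)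
      refine this.congr fun t => by rw [hh]; ring
    have h1 : Tendsto (fun t => stdNormalCDF (g t x)) (𝓝[>] 0) (𝓝 0) :=
      stdNormalCDF_atBot.comp hgbot
    have h2 : Tendsto (fun t => stdNormalCDF (h t x)) (𝓝[>] 0) (𝓝 0) :=
      stdNormalCDF_atBot.comp hhbot
    have : Tendsto (fun t => u t x) (𝓝[>] 0) (𝓝 (x * 0 - K * 1 * 0)) := by
      refine Tendsto.congr (fun t => (hu t x).symm) ?_
      exact ((h1.const_mul x).sub (((hexp.const_mul K)).mul h2))
    simpa [max_eq_right (by linarith : x - K ≤ 0)] using this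
  · -- x = K : limit is 0
    subst hxK
    have hlog : Real.log (x / x) = 0 := by rw [div_self (ne_of_gt hx), Real.log_one]
    have hg0 : Tendsto (fun t => g t x) (𝓝[>] 0) (𝓝 0) := by
      have heq : ∀ t ∈ Set.Ioi (0:ℝ), g t x = ((r + σ^2/2) / σ) * Real.sqrt t := by
        intro t ht
        have ht' : (0:ℝ) < t := ht
        have hst : Real.sqrt t ≠ 0 := ne_of_gt (Real.sqrt_pos.mpr ht')
        rw [hg, hlog, zero_add]
        field_simp
        linear_combination (-1) * Real.sq_sqrt ht'.le
      have : Tendsto (fun t : ℝ => ((r + σ^2/2) / σ) * Real.sqrt t) (𝓝[>] 0) (𝓝 0) := by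
        have : Tendsto (fun t : ℝ => ((r + σ^2/2) / σ) * Real.sqrt t) (𝓝 0)
            (𝓝 (((r + σ^2/2) / σ) * Real.sqrt 0)) :=
          (continuous_const.mul Real.continuous_sqrt).tendsto 0
        simpa using this.mono_left nhdsWithin_le_nhds
      exact this.congr' (by filter_upwards [self_mem_nhdsWithin] with t ht using (heq t ht).symm)
    have hh0 : Tendsto (fun t => h t x) (𝓝[>] 0) (𝓝 0) := by
      have := hg0.sub hsqrt
      simpa using this.congr fun t => (hh t x).symm
    have h1 : Tendsto (fun t => stdNormalCDF (g t x)) (𝓝[>] 0) (𝓝 (stdNormalCDF 0)) :=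
      (stdNormalCDF_continuous.tendsto 0).comp hg0
    have h2 : Tendsto (fun t => stdNormalCDF (h t x)) (𝓝[>] 0) (𝓝 (stdNormalCDF 0)) :=
      (stdNormalCDF_continuous.tendsto 0).comp hh0
    have : Tendsto (fun t => u t x) (𝓝[>] 0)
        (𝓝 (x * stdNormalCDF 0 - x * 1 * stdNormalCDF 0)) := by
      refine Tendsto.congr (fun t => (hu t x).symm) ?_
      exact ((h1.const_mul x).sub (((hexp.const_mul x)).mul h2))
    simpa using this
  · -- x > K : limit is x - K
    have hlog : 0 < Real.log (x / K) := Real.log_pos ((one_lt_div hK).mpr hxK)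
    have hgtop : Tendsto (fun t => g t x) (𝓝[>] 0) atTop := by
      have : Tendsto (fun t : ℝ => (Real.log (x / K) + (r + σ^2/2) * t) * (σ * Real.sqrt t)⁻¹)
          (𝓝[>] 0) atTop := Tendsto.pos_mul_atTop hlog hnum hinv
      refine this.congr fun t => by rw [hg]; exact (div_eq_mul_inv _ _).symm
    have hhtop : Tendsto (fun t => h t x) (𝓝[>] 0) atTop := by
      have := hgtop.atTop_add (hsqrt.neg)
      refine this.congr fun t => by rw [hh]; ring
    have h1 : Tendsto (fun t => stdNormalCDF (g t x)) (𝓝[>] 0) (𝓝 1) :=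
      stdNormalCDF_atTop.comp hgtop
    have h2 : Tendsto (fun t => stdNormalCDF (h t x)) (𝓝[>] 0) (𝓝 1) :=
      stdNormalCDF_atTop.comp hhtop
    have : Tendsto (fun t => u t x) (𝓝[>] 0) (𝓝 (x * 1 - K * 1 * 1)) := by
      refine Tendsto.congr (fun t => (hu t x).symm) ?_
      exact ((h1.const_mul x).sub (((hexp.const_mul K)).mul h2))
    simpa [max_eq_left (by linarith : (0:ℝ) ≤ x - K)] using this
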